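/- Let W be an invertible real p×p matrix and let g : ℝ → ℝ be differentiable with l ≤ g′(x) ≤ u for all x ∈ ℝ, where 0 < l ≤ u. Then the layer map f_{W,g} : ℝ^p → ℝ^p is a bijection; it is Lipschitz with constant ‖W‖₂ · u with respect to the Euclidean norm; its inverse is the map y ↦ (Wᵀ)⁻¹(g⁻¹(y_1),…,g⁻¹(y_p)) and this inverse is Lipschitz with constant ‖W⁻¹‖₂ · (1/l). -/

import Mathlib

open scoped Matrix
open scoped NNReal

/-- The spectral norm `‖W‖₂` of a real `p × p` matrix `W`: the operator norm of the
linear map `x ↦ W x` on the Euclidean space `ℝ^p`. -/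
noncomputable def specNorm {p : ℕ} (W : Matrix (Fin p) (Fin p) ℝ) : ℝ :=
  ‖LinearMap.toContinuousLinearMap (Matrix.toEuclideanLin (𝕜 := ℝ) W)‖

/-- The layer map `f_{W,g} : ℝ^p → ℝ^p` sending `x` to the vector whose `j`-th
coordinate is `g((Wᵀ x)_j)`. -/
noncomputable def layerMap {p : ℕ} (W : Matrix (Fin p) (Fin p) ℝ) (g : ℝ → ℝ) :
    EuclideanSpace ℝ (Fin p) → EuclideanSpace ℝ (Fin p) :=
  fun x => WithLp.toLp 2 (fun j => g (Wᵀ.mulVec x j))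

/-- The candidate inverse of the layer map: `y ↦ (Wᵀ)⁻¹ (g⁻¹(y_1), …, g⁻¹(y_p))`. -/
noncomputable def layerInv {p : ℕ} (W : Matrix (Fin p) (Fin p) ℝ) (g : ℝ → ℝ) :
    EuclideanSpace ℝ (Fin p) → EuclideanSpace ℝ (Fin p) :=
  fun y => WithLp.toLp 2 ((Wᵀ)⁻¹.mulVec (fun j => Function.invFun g (y j)))

lemma specNorm_transpose {p : ℕ} (W : Matrix (Fin p) (Fin p) ℝ) :
    specNorm Wᵀ = specNorm W := by
  unfold specNorm
  rw [← Matrix.conjTranspose_eq_transpose_of_trivial,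
      Matrix.toEuclideanLin_conjTranspose_eq_adjoint,
      LinearMap.adjoint_toContinuousLinearMap]
  exact LinearIsometryEquiv.norm_map ContinuousLinearMap.adjoint _

lemma coordLip {p : ℕ} (h : ℝ → ℝ) (K : ℝ≥0)
    (hh : ∀ a b : ℝ, dist (h a) (h b) ≤ K * dist a b)
    (F : EuclideanSpace ℝ (Fin p) → EuclideanSpace ℝ (Fin p))
    (hF : ∀ x j, F x j = h (x j)) : LipschitzWith K F := by
  apply LipschitzWith.of_dist_le_mul
  intro x y
  rw [EuclideanSpace.dist_eq, EuclideanSpace.dist_eq]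
  simp only [hF]
  have h1 : ∀ j : Fin p, dist (h (x j)) (h (y j)) ^ 2 ≤ (K : ℝ) ^ 2 * dist (x j) (y j) ^ 2 := by
    intro j
    have h2 := hh (x j) (y j)
    have h3 : (0:ℝ) ≤ dist (h (x j)) (h (y j)) := dist_nonneg
    have h4 : (0:ℝ) ≤ dist (x j) (y j) := dist_nonneg
    nlinarith [K.coe_nonneg]
  have h2 : Real.sqrt (∑ j, dist (h (x j)) (h (y j)) ^ 2) ≤
      Real.sqrt ((K : ℝ) ^ 2 * ∑ j, dist (x j) (y j) ^ 2) := by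
    apply Real.sqrt_le_sqrt
    rw [Finset.mul_sum]
    exact Finset.sum_le_sum fun j _ => h1 j
  refine h2.trans (le_of_eq ?_)
  rw [Real.sqrt_mul (sq_nonneg _), Real.sqrt_sq K.coe_nonneg]

theorem stmt2 (p : ℕ) (W : Matrix (Fin p) (Fin p) ℝ) (hW : IsUnit W)
    (g : ℝ → ℝ) (l u : ℝ) (hl : 0 < l) (hlu : l ≤ u)
    (hgdiff : Differentiable ℝ g)
    (hgderiv : ∀ x, l ≤ deriv g x ∧ deriv g x ≤ u) :
    Function.Bijective (layerMap W g) ∧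
      LipschitzWith (specNorm W * u).toNNReal (layerMap W g) ∧
      Function.LeftInverse (layerInv W g) (layerMap W g) ∧
      Function.RightInverse (layerInv W g) (layerMap W g) ∧
      LipschitzWith (specNorm W⁻¹ * (1 / l)).toNNReal (layerInv W g) := by
  have hu0 : (0:ℝ) ≤ u := hl.le.trans hlu
  -- g is u-Lipschitz
  have hgLip : LipschitzWith u.toNNReal g := by
    apply lipschitzWith_of_nnnorm_deriv_le hgdiff
    intro x
    rw [← NNReal.coe_le_coe, coe_nnnorm, Real.coe_toNNReal u hu0, Real.norm_eq_abs]
    exact abs_le.2 ⟨by linarith [(hgderiv x).1], (hgderiv x).2⟩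
  have hglip : ∀ a b : ℝ, dist (g a) (g b) ≤ u * dist a b := by
    intro a b
    have := hgLip.dist_le_mul a b
    rwa [Real.coe_toNNReal u hu0] at this
  -- lower bound on increments of g
  have hglow : ∀ ⦃a b : ℝ⦄, a ≤ b → l * (b - a) ≤ g b - g a :=
    mul_sub_le_image_sub_of_le_deriv hgdiff (fun x => (hgderiv x).1)
  have hgmono : StrictMono g :=
    strictMono_of_deriv_pos (fun x => lt_of_lt_of_le hl (hgderiv x).1)
  have hgsurj : Function.Surjective g := by
    apply hgdiff.continuous.surjective
    · apply Filter.tendsto_atTop_mono' _ _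
        ((Filter.tendsto_atTop_add_const_left Filter.atTop (g 0)
          (Filter.Tendsto.const_mul_atTop hl Filter.tendsto_id)))
      filter_upwards [Filter.eventually_ge_atTop (0:ℝ)] with x hx
      have := hglow hx
      simp only [Filter.id_comp, id]
      nlinarith
    · apply Filter.tendsto_atBot_mono' _ _
        ((Filter.tendsto_atBot_add_const_left Filter.atBot (g 0)
          (Filter.Tendsto.const_mul_atBot hl Filter.tendsto_id)))
      filter_upwards [Filter.eventually_le_atBot (0:ℝ)] with x hx
      have := hglow hx
      simp only [Filter.id_comp, id]
      nlinarith
  have hginj : Function.Injective g := hgmono.injective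
  have hgri : Function.RightInverse (Function.invFun g) g := Function.rightInverse_invFun hgsurj
  have hgli : Function.LeftInverse (Function.invFun g) g := Function.leftInverse_invFun hginj
  -- inverse of g is (1/l)-Lipschitz
  have hkey : ∀ s t : ℝ, l * dist s t ≤ dist (g s) (g t) := by
    intro s t
    rcases le_total s t with h | h
    · rw [dist_comm s t, dist_comm (g s) (g t), Real.dist_eq, Real.dist_eq,
        abs_of_nonneg (sub_nonneg.2 h), abs_of_nonneg (sub_nonneg.2 (hgmono.monotone h))]
      exact hglow h
    · rw [Real.dist_eq, Real.dist_eq,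
        abs_of_nonneg (sub_nonneg.2 h), abs_of_nonneg (sub_nonneg.2 (hgmono.monotone h))]
      exact hglow h
  have hinvlip : ∀ a b : ℝ, dist (Function.invFun g a) (Function.invFun g b) ≤ (1/l) * dist a b := by
    intro a b
    have h1 := hkey (Function.invFun g a) (Function.invFun g b)
    rw [hgri a, hgri b] at h1
    rw [one_div, inv_mul_eq_div]
    exact (le_div_iff₀' hl).mpr h1
  -- matrix facts
  have hdetT : IsUnit Wᵀ.det := by
    rw [Matrix.det_transpose]
    exact (Matrix.isUnit_iff_isUnit_det W).1 hW
  have hinv1 : Wᵀ⁻¹ * Wᵀ = 1 := Matrix.nonsing_inv_mul _ hdetT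
  have hinv2 : Wᵀ * Wᵀ⁻¹ = 1 := Matrix.mul_nonsing_inv _ hdetT
  -- left inverse
  have hLI : Function.LeftInverse (layerInv W g) (layerMap W g) := by
    intro x
    have e0 : (fun j => Function.invFun g (g ((Wᵀ *ᵥ x) j))) = Wᵀ.mulVec x :=
      funext fun j => hgli _
    show WithLp.toLp 2 (Wᵀ⁻¹ *ᵥ (fun j => Function.invFun g (g ((Wᵀ *ᵥ x) j)))) = WithLp.toLp 2 x.ofLp
    rw [e0, Matrix.mulVec_mulVec, hinv1, Matrix.one_mulVec]
  -- right inverse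
  have hRI : Function.RightInverse (layerInv W g) (layerMap W g) := by
    intro y
    have e1 : Wᵀ.mulVec ((Wᵀ)⁻¹.mulVec (fun j => Function.invFun g (y j))) =
        (fun j => Function.invFun g (y j)) := by
      rw [Matrix.mulVec_mulVec, hinv2, Matrix.one_mulVec]
    show WithLp.toLp 2 (fun j => g (Wᵀ.mulVec ((Wᵀ)⁻¹.mulVec (fun j => Function.invFun g (y j))) j)) = WithLp.toLp 2 y.ofLp
    rw [e1]
    exact congrArg (WithLp.toLp 2) (funext fun j => hgri (y j))
  -- Lipschitz for layerMap
  set L := LinearMap.toContinuousLinearMap (Matrix.toEuclideanLin (𝕜 := ℝ) Wᵀ) with hL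
  have hGlip : LipschitzWith u.toNNReal
      (fun x : EuclideanSpace ℝ (Fin p) => (layerMap 1 g x : EuclideanSpace ℝ (Fin p))) := by
    apply coordLip g u.toNNReal _ _ (fun x j => ?_)
    · intro a b
      rw [Real.coe_toNNReal u hu0]
      exact hglip a b
    · show g ((1ᵀ : Matrix (Fin p) (Fin p) ℝ).mulVec x j) = g (x j)
      rw [Matrix.transpose_one, Matrix.one_mulVec]
  have hmap : layerMap W g = (layerMap 1 g) ∘ L := by
    funext x
    show layerMap W g x = layerMap 1 g (L x)
    unfold layerMap
    congr 1
    funext j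
    congr 1
    show Wᵀ.mulVec x j = (1ᵀ : Matrix (Fin p) (Fin p) ℝ).mulVec (L x) j
    rw [Matrix.transpose_one, Matrix.one_mulVec]
    rfl
  have hlip1 : LipschitzWith (u.toNNReal * ‖L‖₊) (layerMap W g) := by
    rw [hmap]
    exact hGlip.comp L.lipschitz
  have hnorm1 : (specNorm W * u).toNNReal = u.toNNReal * ‖L‖₊ := by
    rw [Real.toNNReal_mul (by unfold specNorm; exact norm_nonneg _), mul_comm]
    congr 1
    rw [← specNorm_transpose W]
    show (specNorm Wᵀ).toNNReal = ‖L‖₊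
    rw [hL]
    unfold specNorm
    rw [← coe_nnnorm, Real.toNNReal_coe]
  -- Lipschitz for layerInv
  set L' := LinearMap.toContinuousLinearMap (Matrix.toEuclideanLin (𝕜 := ℝ) (Wᵀ)⁻¹) with hL'
  have hone : (1 : Matrix (Fin p) (Fin p) ℝ)⁻¹ = 1 := Matrix.inv_eq_left_inv (by simp)
  have hG'lip : LipschitzWith (1/l).toNNReal (layerInv (1 : Matrix (Fin p) (Fin p) ℝ) g) := by
    apply coordLip (Function.invFun g) (1/l).toNNReal _ _ (fun x j => ?_)
    · intro a b
      rw [Real.coe_toNNReal _ (by positivity : (0:ℝ) ≤ 1/l)]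
      exact hinvlip a b
    · show ((1ᵀ : Matrix (Fin p) (Fin p) ℝ)⁻¹ *ᵥ fun j => Function.invFun g (x j)) j =
        Function.invFun g (x j)
      rw [Matrix.transpose_one, hone, Matrix.one_mulVec]
  have hmap' : layerInv W g = L' ∘ (layerInv (1 : Matrix (Fin p) (Fin p) ℝ) g) := by
    funext y
    show layerInv W g y = L' (layerInv 1 g y)
    show WithLp.toLp 2 (Wᵀ⁻¹ *ᵥ (fun j => Function.invFun g (y j))) =
      WithLp.toLp 2 (Wᵀ⁻¹ *ᵥ ((1ᵀ : Matrix (Fin p) (Fin p) ℝ)⁻¹ *ᵥ fun j => Function.invFun g (y j)))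
    rw [Matrix.transpose_one, hone, Matrix.one_mulVec]
  have hlip2 : LipschitzWith (‖L'‖₊ * (1/l).toNNReal) (layerInv W g) := by
    rw [hmap']
    exact L'.lipschitz.comp hG'lip
  have hnorm2 : (specNorm W⁻¹ * (1/l)).toNNReal = ‖L'‖₊ * (1/l).toNNReal := by
    rw [Real.toNNReal_mul (by
      have : specNorm W⁻¹ = specNorm (W⁻¹)ᵀ := (specNorm_transpose _).symm
      rw [this, Matrix.transpose_nonsing_inv]
      exact norm_nonneg _)]
    congr 1
    have : specNorm W⁻¹ = specNorm ((W⁻¹)ᵀ) := (specNorm_transpose _).symm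
    rw [this, Matrix.transpose_nonsing_inv]
    show (specNorm (Wᵀ)⁻¹).toNNReal = ‖L'‖₊
    rw [hL']
    unfold specNorm
    rw [← coe_nnnorm, Real.toNNReal_coe]
  refine ⟨Function.bijective_iff_has_inverse.mpr ⟨layerInv W g, hLI, hRI⟩, ?_, hLI, hRI, ?_⟩
  · rw [hnorm1]; exact hlip1
  · rw [hnorm2]; exact hlip2
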